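/- arXiv:1605.02363 — 2 statements merged into one kernel-verified Lean document; each statement's English description precedes it below -/
import Mathlib

section
/- Let Λ : (0,R₀] → [0,∞) be non-decreasing with Λ(R₀) < 1/1000 and R₀ < 1. Fix r ∈ (0, R₀], set a = 4Λ(r)r and y₀ = (0,...,0,−a) ∈ ℝⁿ. Let φ : ℝ^{n−1} → ℝ with φ(0) = 0, and suppose for every x' with |x'| ≤ r: |φ(x')| ≤ (3/2)Λ(r)r, and the unit normal ν(x) = (−D'φ(x'), 1)/√(1+|D'φ(x')|²) at x = (x', φ(x')) satisfies |ν(x) − eₙ| ≤ Λ(r). Then for every such boundary point x with |x| ≤ r one has (rΛ(r))/2 ≤ ⟨x − y₀, ν(x)⟩ ≤ 10 rΛ(r). -/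
open scoped RealInnerProductSpace

lemma inner_snoc_snoc {m : ℕ} (x y : EuclideanSpace ℝ (Fin m)) (a b : ℝ) :
    ⟪(show EuclideanSpace ℝ (Fin (m+1)) from WithLp.toLp 2 (Fin.snoc (WithLp.ofLp x) a : Fin (m + 1) → ℝ)),
     (show EuclideanSpace ℝ (Fin (m+1)) from WithLp.toLp 2 (Fin.snoc (WithLp.ofLp y) b : Fin (m + 1) → ℝ))⟫ = ⟪x, y⟫ + a * b := by
  simp only [PiLp.inner_apply, RCLike.inner_apply, starRingEnd_apply, star_trivial]
  rw [Fin.sum_univ_castSucc]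
  simp [Fin.snoc_castSucc, Fin.snoc_last]
  ring

lemma norm_snoc_sq {m : ℕ} (x : EuclideanSpace ℝ (Fin m)) (a : ℝ) :
    ‖(show EuclideanSpace ℝ (Fin (m+1)) from WithLp.toLp 2 (Fin.snoc (WithLp.ofLp x) a : Fin (m + 1) → ℝ))‖^2 = ‖x‖^2 + a^2 := by
  rw [← real_inner_self_eq_norm_sq, ← real_inner_self_eq_norm_sq, inner_snoc_snoc]
  ring

lemma single_last_eq {m : ℕ} :
    (EuclideanSpace.single (Fin.last m) (1:ℝ)) =
      (show EuclideanSpace ℝ (Fin (m+1)) from WithLp.toLp 2 (Fin.snoc (WithLp.ofLp (0 : EuclideanSpace ℝ (Fin m))) 1 : Fin (m + 1) → ℝ)) := by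
  ext i
  refine Fin.lastCases ?_ (fun j => ?_) i
  · simp
  · simp [EuclideanSpace.single_apply, (Fin.castSucc_lt_last j).ne, Fin.snoc_castSucc]

set_option maxHeartbeats 1000000 in
theorem stmt10 {m : ℕ} (Λ : ℝ → ℝ) (R₀ : ℝ) (hR₀0 : 0 < R₀) (hR₀1 : R₀ < 1)
    (hmono : ∀ s t : ℝ, 0 < s → s ≤ t → t ≤ R₀ → Λ s ≤ Λ t)
    (hnn : ∀ s : ℝ, 0 ≤ Λ s) (hsmall : Λ R₀ < 1 / 1000)
    (r : ℝ) (hr0 : 0 < r) (hrR : r ≤ R₀)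
    (φ : EuclideanSpace ℝ (Fin m) → ℝ) (hφ0 : φ 0 = 0)
    (g : EuclideanSpace ℝ (Fin m) → EuclideanSpace ℝ (Fin m))
    (ν : EuclideanSpace ℝ (Fin m) → EuclideanSpace ℝ (Fin (m + 1)))
    (hν : ∀ x', ν x' =
      (Real.sqrt (1 + ‖g x'‖ ^ 2))⁻¹ •
        (show EuclideanSpace ℝ (Fin (m + 1)) from WithLp.toLp 2 (Fin.snoc (WithLp.ofLp (-(g x'))) 1 : Fin (m + 1) → ℝ)))
    (hφb : ∀ x' : EuclideanSpace ℝ (Fin m), ‖x'‖ ≤ r → |φ x'| ≤ 3 / 2 * Λ r * r)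
    (hνe : ∀ x' : EuclideanSpace ℝ (Fin m), ‖x'‖ ≤ r →
      ‖ν x' - EuclideanSpace.single (Fin.last m) (1 : ℝ)‖ ≤ Λ r) :
    ∀ x' : EuclideanSpace ℝ (Fin m),
      ‖(show EuclideanSpace ℝ (Fin (m + 1)) from WithLp.toLp 2 (Fin.snoc (WithLp.ofLp x') (φ x') : Fin (m + 1) → ℝ))‖ ≤ r →
      r * Λ r / 2 ≤
          ⟪(show EuclideanSpace ℝ (Fin (m + 1)) from WithLp.toLp 2 (Fin.snoc (WithLp.ofLp x') (φ x') : Fin (m + 1) → ℝ)) -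
              (-(4 * Λ r * r) • EuclideanSpace.single (Fin.last m) (1 : ℝ)), ν x'⟫ ∧
        ⟪(show EuclideanSpace ℝ (Fin (m + 1)) from WithLp.toLp 2 (Fin.snoc (WithLp.ofLp x') (φ x') : Fin (m + 1) → ℝ)) -
              (-(4 * Λ r * r) • EuclideanSpace.single (Fin.last m) (1 : ℝ)), ν x'⟫ ≤
          10 * r * Λ r := by
  intro x' hx
  set L := Λ r with hLdef
  have hL0 : 0 ≤ L := hnn r
  have hL : L < 1 / 1000 := lt_of_le_of_lt (hmono r R₀ hr0 hrR le_rfl) hsmall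
  set G := g x' with hGdef
  set s := Real.sqrt (1 + ‖G‖ ^ 2) with hsdef
  have h1G : (0:ℝ) < 1 + ‖G‖ ^ 2 := by positivity
  have hs1 : 1 ≤ s := by
    have h := Real.sqrt_le_sqrt (show (1:ℝ) ≤ 1 + ‖G‖ ^ 2 by nlinarith [sq_nonneg ‖G‖])
    rwa [Real.sqrt_one] at h
  have hs0 : 0 < s := lt_of_lt_of_le one_pos hs1
  have hssq : s ^ 2 = 1 + ‖G‖ ^ 2 := Real.sq_sqrt h1G.le
  have hx' : ‖x'‖ ≤ r := by
    have h2 : ‖(show EuclideanSpace ℝ (Fin (m+1)) from WithLp.toLp 2 (Fin.snoc (WithLp.ofLp x') (φ x') : Fin (m + 1) → ℝ))‖ ^ 2 ≤ r ^ 2 :=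
      pow_le_pow_left₀ (norm_nonneg _) hx 2
    rw [norm_snoc_sq] at h2
    nlinarith [norm_nonneg x', sq_nonneg (φ x')]
  have hφr : |φ x'| ≤ 3 / 2 * L * r := hφb x' hx'
  have hνr : ‖ν x' - EuclideanSpace.single (Fin.last m) (1 : ℝ)‖ ≤ L := hνe x' hx'
  -- bound on ‖G‖
  have hgs : ‖G‖ ≤ L * s := by
    rcases eq_or_ne G 0 with h | h
    · simp only [h, norm_zero]; exact mul_nonneg hL0 hs0.le
    · have hGn : (0:ℝ) < ‖G‖ := norm_pos_iff.mpr h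
      set u : EuclideanSpace ℝ (Fin (m+1)) :=
        (show EuclideanSpace ℝ (Fin (m+1)) from WithLp.toLp 2 (Fin.snoc (WithLp.ofLp (-(‖G‖⁻¹ • G))) 0 : Fin (m + 1) → ℝ)) with hudef
      have hu : ‖u‖ = 1 := by
        have h2 : ‖u‖ ^ 2 = 1 := by
          rw [hudef, norm_snoc_sq]
          rw [norm_neg, norm_smul, norm_inv, norm_norm]
          field_simp
          norm_num
        nlinarith [norm_nonneg u]
      have hinner : ⟪ν x' - EuclideanSpace.single (Fin.last m) (1 : ℝ), u⟫ = s⁻¹ * ‖G‖ := by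
        rw [hν x', single_last_eq, hudef, inner_sub_left, real_inner_smul_left,
          inner_snoc_snoc, inner_snoc_snoc]
        rw [inner_neg_neg, real_inner_smul_right, real_inner_self_eq_norm_sq]
        rw [inner_zero_left]
        field_simp
        ring
      have hle := real_inner_le_norm (ν x' - EuclideanSpace.single (Fin.last m) (1 : ℝ)) u
      rw [hinner, hu, mul_one] at hle
      have : s⁻¹ * ‖G‖ ≤ L := le_trans hle hνr
      calc ‖G‖ = s * (s⁻¹ * ‖G‖) := by field_simp
        _ ≤ s * L := by exact mul_le_mul_of_nonneg_left this hs0.le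
        _ = L * s := by ring
  have hg2 : ‖G‖ ^ 2 ≤ L ^ 2 * (1 + ‖G‖ ^ 2) := by
    have := mul_le_mul hgs hgs (norm_nonneg G) (by positivity : (0:ℝ) ≤ L * s)
    nlinarith [hssq]
  have hL2 : L ^ 2 < 1 / 1000000 := by nlinarith
  have hgLL : ‖G‖ ≤ 11 / 10 * L := by
    nlinarith [norm_nonneg G, sq_nonneg (‖G‖ - 11 / 10 * L), sq_nonneg (‖G‖ + 11 / 10 * L)]
  have hs2 : s ≤ 2 := by nlinarith
  have hsinv1 : s⁻¹ ≤ 1 := by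
    rw [inv_le_one_iff₀]; right; exact hs1
  have hsinvhalf : (1:ℝ) / 2 ≤ s⁻¹ := by
    rw [inv_eq_one_div]
    exact one_div_le_one_div_of_le hs0 hs2
  have hip : |⟪x', -G⟫| ≤ r * (11 / 10 * L) := by
    have h1 : |⟪x', -G⟫| ≤ ‖x'‖ * ‖(-G : EuclideanSpace ℝ (Fin m))‖ :=
      abs_real_inner_le_norm x' (-G)
    rw [norm_neg] at h1
    exact le_trans h1 (mul_le_mul hx' hgLL (norm_nonneg G) hr0.le)
  have hkey : ⟪(show EuclideanSpace ℝ (Fin (m + 1)) from WithLp.toLp 2 (Fin.snoc (WithLp.ofLp x') (φ x') : Fin (m + 1) → ℝ)) -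
        (-(4 * L * r) • EuclideanSpace.single (Fin.last m) (1 : ℝ)), ν x'⟫ =
      s⁻¹ * (⟪x', -G⟫ + φ x' + 4 * L * r) := by
    rw [hν x', single_last_eq, inner_sub_left, real_inner_smul_left,
      real_inner_smul_right, real_inner_smul_right, inner_snoc_snoc, inner_snoc_snoc,
      inner_zero_left]
    ring
  rw [hkey]
  set N := ⟪x', -G⟫ + φ x' + 4 * L * r with hNdef
  have habs1 := abs_le.mp hφr
  have habs2 := abs_le.mp hip
  have hN1 : 7 / 5 * L * r ≤ N := by rw [hNdef]; nlinarith
  have hN0 : 0 ≤ N :=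
    le_trans (mul_nonneg (mul_nonneg (by norm_num) hL0) hr0.le) hN1
  have hN2 : N ≤ 33 / 5 * L * r := by rw [hNdef]; nlinarith
  constructor
  · have h1 : (1:ℝ) / 2 * (7 / 5 * L * r) ≤ s⁻¹ * N :=
      mul_le_mul hsinvhalf hN1 (by positivity) (by positivity)
    nlinarith
  · have h1 : s⁻¹ * N ≤ 1 * N := mul_le_mul_of_nonneg_right hsinv1 hN0
    nlinarith
end

section
/- Let H : (0,R) → (0,∞) be differentiable, α > −1, and suppose (d/dr) log(H(r)/r^{2α+n}) = O(r) + N(r)/((α+1)r) on (0,R), where |O(r)| ≤ C̄ uniformly and N : (0,R) → ℝ satisfies N(s) ≤ C̄'(N(t) + C₂M) whenever 0 < s < t < R, for constants C̄' ≥ 1, C₂, M > 0. Then for 0 < r₁ < r₂ < R: log(H(r₂)/H(r₁)) ≤ (2α+n) log(r₂/r₁) + (C̄'/(α+1))(N(r₂) + C₂M) log(r₂/r₁) + C̄(r₂ − r₁). -/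
theorem stmt18 (n : ℕ) (H N O : ℝ → ℝ) (R α Cbar Cbar' C₂ M : ℝ)
    (hR : 0 < R) (hα : -1 < α) (hCbar : 0 ≤ Cbar) (hCbar' : 1 ≤ Cbar')
    (hC₂ : 0 < C₂) (hM : 0 < M)
    (hHpos : ∀ r ∈ Set.Ioo (0 : ℝ) R, 0 < H r)
    (hO : ∀ r ∈ Set.Ioo (0 : ℝ) R, |O r| ≤ Cbar)
    (hderiv : ∀ r ∈ Set.Ioo (0 : ℝ) R,
      HasDerivAt (fun s => Real.log (H s / s ^ (2 * α + n)))
        (O r + N r / ((α + 1) * r)) r)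
    (hNmono : ∀ s t : ℝ, 0 < s → s < t → t < R → N s ≤ Cbar' * (N t + C₂ * M)) :
    ∀ r₁ r₂ : ℝ, 0 < r₁ → r₁ < r₂ → r₂ < R →
      Real.log (H r₂ / H r₁) ≤
        (2 * α + n) * Real.log (r₂ / r₁) +
          Cbar' / (α + 1) * (N r₂ + C₂ * M) * Real.log (r₂ / r₁) +
          Cbar * (r₂ - r₁) := by
  intro r₁ r₂ hr₁ h12 h2R
  have hα1 : (0:ℝ) < α + 1 := by linarith
  set K : ℝ := Cbar' / (α + 1) * (N r₂ + C₂ * M) with hK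
  set g : ℝ → ℝ := fun r => Real.log (H r / r ^ (2 * α + n)) - K * Real.log r - Cbar * r
    with hg
  have hsub : Set.Icc r₁ r₂ ⊆ Set.Ioo (0:ℝ) R := fun x hx =>
    ⟨lt_of_lt_of_le hr₁ hx.1, lt_of_le_of_lt hx.2 h2R⟩
  have hgderiv : ∀ r ∈ Set.Icc r₁ r₂,
      HasDerivAt g (O r + N r / ((α + 1) * r) - K * (1 / r) - Cbar) r := by
    intro r hr
    have hrmem := hsub hr
    have h1 := hderiv r hrmem
    have h2 : HasDerivAt (fun s => K * Real.log s) (K * (1 / r)) r :=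
      ((Real.hasDerivAt_log (ne_of_gt hrmem.1)).const_mul K).congr_deriv (by ring)
    have h3 : HasDerivAt (fun s => Cbar * s) Cbar r := by
      simpa using (hasDerivAt_id r).const_mul Cbar
    exact (h1.sub h2).sub h3
  have hanti : AntitoneOn g (Set.Icc r₁ r₂) := by
    apply antitoneOn_of_deriv_nonpos (convex_Icc r₁ r₂)
    · intro x hx
      exact (hgderiv x hx).continuousAt.continuousWithinAt
    · intro x hx
      rw [interior_Icc] at hx
      have hx' : x ∈ Set.Icc r₁ r₂ := ⟨le_of_lt hx.1, le_of_lt hx.2⟩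
      exact (hgderiv x hx').differentiableAt.differentiableWithinAt
    · intro x hx
      rw [interior_Icc] at hx
      have hx' : x ∈ Set.Icc r₁ r₂ := ⟨le_of_lt hx.1, le_of_lt hx.2⟩
      rw [(hgderiv x hx').deriv]
      have hxpos : 0 < x := (hsub hx').1
      have hOx : O x ≤ Cbar := (abs_le.mp (hO x (hsub hx'))).2
      have hNx : N x ≤ Cbar' * (N r₂ + C₂ * M) := hNmono x r₂ hxpos hx.2 h2R
      have : N x / ((α + 1) * x) ≤ K * (1 / x) := by
        rw [hK, div_le_iff₀ (by positivity)]
        have : K * (1 / x) * ((α + 1) * x) = Cbar' * (N r₂ + C₂ * M) := by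
          field_simp [hK]
          rw [hK]; field_simp
        rw [this]
        exact hNx
      linarith
  have hgle : g r₂ ≤ g r₁ := hanti (Set.left_mem_Icc.mpr (le_of_lt h12))
    (Set.right_mem_Icc.mpr (le_of_lt h12)) (le_of_lt h12)
  have hr₂pos : 0 < r₂ := lt_trans hr₁ h12
  have hH1 := hHpos r₁ (hsub (Set.left_mem_Icc.mpr (le_of_lt h12)))
  have hH2 := hHpos r₂ (hsub (Set.right_mem_Icc.mpr (le_of_lt h12)))
  have hlog : ∀ r : ℝ, 0 < r → 0 < H r →
      Real.log (H r / r ^ (2 * α + n)) = Real.log (H r) - (2 * α + n) * Real.log r := by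
    intro r hr hHr
    rw [Real.log_div (ne_of_gt hHr) (ne_of_gt (Real.rpow_pos_of_pos hr _)),
      Real.log_rpow hr]
  have e1 := hlog r₁ hr₁ hH1
  have e2 := hlog r₂ hr₂pos hH2
  have hlogdiv : Real.log (H r₂ / H r₁) = Real.log (H r₂) - Real.log (H r₁) :=
    Real.log_div (ne_of_gt hH2) (ne_of_gt hH1)
  have hlogr : Real.log (r₂ / r₁) = Real.log r₂ - Real.log r₁ :=
    Real.log_div (ne_of_gt hr₂pos) (ne_of_gt hr₁)
  simp only [hg, e1, e2] at hgle
  rw [hlogdiv, hlogr]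
  nlinarith [hgle]
end
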